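/- Let a : Fin n → ℕ be thick-level widths and b : Fin (n-1) → ℕ be thin-level widths with b_j ≥ 2 for all j, b_j < min(a_j, a_{j+1}), and all a_i, b_j even. Then the bridge number B = (1/2)(Σ a_i − Σ b_j) satisfies B ≥ (1/2)·max a_i, i.e., 2B ≥ trunk. -/
import Mathlib

theorem stmt_8 (n : ℕ) (a : Fin n → ℕ) (b : Fin (n - 1) → ℕ)
    (hb2 : ∀ j, 2 ≤ b j)
    (hadj : ∀ j : Fin (n - 1), b j < min (a ⟨j.1, by omega⟩) (a ⟨j.1 + 1, by omega⟩))
    (haeven : ∀ i, Even (a i)) (hbeven : ∀ j, Even (b j)) :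
    2 * ((∑ i, a i - ∑ j, b j) / 2) ≥ Finset.univ.sup a := by
  -- key claim: for each k, a k ≤ ∑ a - ∑ b
  have key : ∀ k : Fin n, a k ≤ ∑ i, a i - ∑ j, b j := by
    intro k
    have hj : ∀ j : Fin (n-1), j.1 < n := fun j => by omega
    -- injection f : Fin (n-1) → Fin n avoiding k
    set f : Fin (n-1) → Fin n := fun j =>
      if j.1 < k.1 then ⟨j.1, hj j⟩ else ⟨j.1 + 1, by have := j.2; omega⟩ with hf
    have hble : ∀ j, b j ≤ a (f j) := by
      intro j
      have := hadj j
      rw [lt_min_iff] at this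
      by_cases h : j.1 < k.1 <;> simp [hf, h] <;> omega
    have hfinj : Function.Injective f := by
      intro x y hxy
      simp only [hf] at hxy
      by_cases hx : x.1 < k.1 <;> by_cases hy : y.1 < k.1 <;>
        simp [hx, hy, Fin.ext_iff] at hxy ⊢ <;> omega
    have hfne : ∀ j, f j ≠ k := by
      intro j
      by_cases h : j.1 < k.1 <;> simp [hf, h, Fin.ext_iff] <;> omega
    have h1 : ∑ j, b j ≤ ∑ j, a (f j) := Finset.sum_le_sum fun j _ => hble j
    have h2 : ∑ j, a (f j) = ∑ i ∈ Finset.univ.image f, a i := by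
      rw [Finset.sum_image (fun x _ y _ h => hfinj h)]
    have h3 : Finset.univ.image f ⊆ Finset.univ.erase k := by
      intro i hi
      simp only [Finset.mem_image] at hi
      obtain ⟨j, _, rfl⟩ := hi
      exact Finset.mem_erase.mpr ⟨hfne j, Finset.mem_univ _⟩
    have h4 : ∑ i ∈ Finset.univ.image f, a i ≤ ∑ i ∈ Finset.univ.erase k, a i :=
      Finset.sum_le_sum_of_subset h3
    have h5 : a k + ∑ i ∈ Finset.univ.erase k, a i = ∑ i, a i :=
      Finset.add_sum_erase _ _ (Finset.mem_univ k)
    omega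
  have heva : Even (∑ i, a i) := Finset.even_sum (f := a) fun i _ => haeven i
  have hevb : Even (∑ j, b j) := Finset.even_sum (f := b) fun j _ => hbeven j
  have hev : Even (∑ i, a i - ∑ j, b j) := by obtain ⟨x,hx⟩ := heva; obtain ⟨y,hy⟩ := hevb; exact ⟨x - y, by omega⟩
  rw [Nat.mul_div_cancel' hev.two_dvd]
  exact Finset.sup_le fun k _ => key k
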